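/- Let f : [0,1]^{d1}×[0,1]^{d2}×[0,1]^{d3} → ℝ be L-Lipschitz (sum of Euclidean norms). The minimal rank r(ε) needed so that some separable function of rank r(ε) approximates f uniformly within ε satisfies r(ε) ≤ C·(L/ε)^{d1+d3} for all ε ∈ (0, L], where C depends only on d1, d3. -/

import Mathlib

open scoped BigOperators

/-- membership in the unit cube `[0,1]^d`. -/
def inCube {d : ℕ} (x : EuclideanSpace ℝ (Fin d)) : Prop := ∀ i, 0 ≤ x i ∧ x i ≤ 1

namespace RankAccAux

/-- cell index of a point, coordinatewise. -/
noncomputable def idx {d : ℕ} (N : ℕ) (hN : 0 < N) (x : EuclideanSpace ℝ (Fin d)) :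
    Fin d → Fin N := fun i =>
  ⟨min ⌊(N : ℝ) * x i⌋₊ (N - 1), lt_of_le_of_lt (min_le_right _ _) (Nat.sub_lt hN one_pos)⟩

/-- center of a cell. -/
noncomputable def grid {d : ℕ} (N : ℕ) (j : Fin d → Fin N) : EuclideanSpace ℝ (Fin d) :=
  WithLp.toLp 2 (fun i => ((j i : ℝ) + 1/2) / N)

lemma grid_inCube {d : ℕ} (N : ℕ) (hN : 0 < N) (j : Fin d → Fin N) : inCube (grid N j) := by
  intro i
  have hjN : (j i : ℝ) ≤ (N : ℝ) - 1 := by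
    have := (j i).is_lt
    have : ((j i : ℕ) : ℝ) + 1 ≤ (N : ℝ) := by exact_mod_cast this
    linarith
  have hN' : (0 : ℝ) < N := by exact_mod_cast hN
  constructor
  · have : (0:ℝ) ≤ (j i : ℝ) + 1/2 := by positivity
    exact div_nonneg this hN'.le
  · show ((j i : ℝ) + 1/2) / N ≤ 1
    rw [div_le_one hN']
    linarith

lemma idx_coord_bound {d : ℕ} (N : ℕ) (hN : 0 < N) (x : EuclideanSpace ℝ (Fin d))
    (hx : inCube x) (i : Fin d) :
    |x i - grid N (idx N hN x) i| ≤ 1 / (2 * N) := by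
  have hN' : (0 : ℝ) < N := by exact_mod_cast hN
  obtain ⟨hx0, hx1⟩ := hx i
  set t : ℝ := x i with ht
  set m : ℕ := ⌊(N : ℝ) * t⌋₊ with hm
  set j : ℕ := min m (N - 1) with hj
  have hNt0 : (0:ℝ) ≤ (N:ℝ) * t := by positivity
  have key : (j : ℝ) ≤ (N:ℝ) * t ∧ (N:ℝ) * t ≤ (j : ℝ) + 1 := by
    by_cases h : m ≤ N - 1
    · have hjm : j = m := min_eq_left h
      constructor
      · rw [hjm]; exact Nat.floor_le hNt0
      · rw [hjm]
        have := Nat.lt_floor_add_one ((N:ℝ) * t)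
        rw [← hm] at this
        exact_mod_cast this.le
    · push_neg at h
      have hmN : N ≤ m := by omega
      have h1 : (N : ℝ) ≤ (N:ℝ) * t := by
        calc (N:ℝ) ≤ (m:ℝ) := by exact_mod_cast hmN
        _ ≤ (N:ℝ) * t := Nat.floor_le hNt0
      have h2 : (N:ℝ) * t ≤ (N:ℝ) := by nlinarith
      have hjm : j = N - 1 := min_eq_right (by omega)
      have hcast : (j : ℝ) = (N:ℝ) - 1 := by
        rw [hjm]; push_cast [Nat.cast_sub hN]; ring
      constructor
      · rw [hcast]; linarith
      · rw [hcast]; linarith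
  have hgrid : grid N (idx N hN x) i = ((j:ℝ) + 1/2) / N := rfl
  rw [hgrid]
  have heq : t - ((j:ℝ) + 1/2) / N = ((N:ℝ) * t - ((j:ℝ) + 1/2)) / N := by
    field_simp
  rw [heq, abs_div, abs_of_pos hN']
  rw [div_le_div_iff₀ hN' (by positivity)]
  have : |(N:ℝ) * t - ((j:ℝ) + 1/2)| ≤ 1/2 := by
    rw [abs_le]; constructor <;> [linarith [key.2]; linarith [key.1]]
  nlinarith [this]

lemma norm_le_of_coord {d : ℕ} (x : EuclideanSpace ℝ (Fin d)) (c : ℝ) (hc : 0 ≤ c)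
    (h : ∀ i, |x i| ≤ c) : ‖x‖ ≤ (d : ℝ) * c := by
  rw [EuclideanSpace.norm_eq]
  have hsum : ∑ i, ‖x i‖ ^ 2 ≤ (d:ℝ) * c ^ 2 := by
    calc ∑ i, ‖x i‖ ^ 2 ≤ ∑ _i : Fin d, c ^ 2 := by
          apply Finset.sum_le_sum
          intro i _
          have := h i
          rw [Real.norm_eq_abs]
          nlinarith [abs_nonneg (x i)]
    _ = (d:ℝ) * c ^ 2 := by rw [Finset.sum_const, Finset.card_univ, Fintype.card_fin, nsmul_eq_mul]
  have h2 : (d:ℝ) * c ^ 2 ≤ ((d:ℝ) * c) ^ 2 := by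
    have : (d:ℝ) ≤ (d:ℝ)^2 := by
      rcases Nat.eq_zero_or_pos d with h | h
      · simp [h]
      · have h1 : (1:ℝ) ≤ (d:ℝ) := by exact_mod_cast h
        nlinarith
    nlinarith
  calc Real.sqrt (∑ i, ‖x i‖ ^ 2) ≤ Real.sqrt (((d:ℝ) * c) ^ 2) := by
        apply Real.sqrt_le_sqrt; linarith
  _ = (d:ℝ) * c := Real.sqrt_sq (by positivity)

lemma norm_sub_grid {d : ℕ} (N : ℕ) (hN : 0 < N) (x : EuclideanSpace ℝ (Fin d))
    (hx : inCube x) : ‖x - grid N (idx N hN x)‖ ≤ (d : ℝ) / (2 * N) := by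
  have hN' : (0 : ℝ) < N := by exact_mod_cast hN
  have := norm_le_of_coord (x - grid N (idx N hN x)) (1 / (2 * N)) (by positivity)
    (fun i => by
      have h := idx_coord_bound N hN x hx i
      simpa using h)
  calc ‖x - grid N (idx N hN x)‖ ≤ (d:ℝ) * (1 / (2 * N)) := this
  _ = (d:ℝ) / (2 * N) := by ring

end RankAccAux

open RankAccAux in
/-- Rank–accuracy tradeoff: an `L`-Lipschitz trivariate function is approximated
within `ε` by a separable function of rank at most `C·(L/ε)^{d1+d3}`, for all
`ε ∈ (0, L]`. -/
theorem rank_accuracy_tradeoff (d1 d2 d3 : ℕ) :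
    ∃ C : ℝ, 0 < C ∧
      ∀ (L : ℝ) (f : EuclideanSpace ℝ (Fin d1) → EuclideanSpace ℝ (Fin d2) →
          EuclideanSpace ℝ (Fin d3) → ℝ),
        (∀ θ θ' ρ ρ' ω ω', inCube θ → inCube θ' → inCube ρ → inCube ρ' →
            inCube ω → inCube ω' →
          |f θ' ρ' ω' - f θ ρ ω| ≤ L * (‖θ' - θ‖ + ‖ρ' - ρ‖ + ‖ω' - ω‖)) →
        ∀ ε : ℝ, 0 < ε → ε ≤ L →
          ∃ (r : ℕ) (u : Fin r → EuclideanSpace ℝ (Fin d1) → ℝ)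
            (v : Fin r → EuclideanSpace ℝ (Fin d2) → ℝ)
            (w : Fin r → EuclideanSpace ℝ (Fin d3) → ℝ),
            (r : ℝ) ≤ C * (L / ε) ^ (d1 + d3) ∧
            ∀ θ ρ ω, inCube θ → inCube ρ → inCube ω →
              |f θ ρ ω - ∑ ℓ, u ℓ θ * v ℓ ρ * w ℓ ω| ≤ ε := by
  classical
  refine ⟨((d1:ℝ) + d3 + 2) ^ (d1 + d3), by positivity, ?_⟩
  intro L f hf ε hε hεL
  have hL : 0 < L := lt_of_lt_of_le hε hεL
  set D : ℝ := (d1:ℝ) + d3 + 1 with hD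
  set N : ℕ := ⌈D * L / ε⌉₊ with hNdef
  have hDpos : 0 < D := by positivity
  have hN : 0 < N := by
    rw [hNdef]
    apply Nat.ceil_pos.2
    positivity
  have hN' : (0 : ℝ) < N := by exact_mod_cast hN
  have hNge : D * L / ε ≤ (N : ℝ) := Nat.le_ceil _
  have hLε : 1 ≤ L / ε := (one_le_div hε).2 hεL
  have hNle : (N : ℝ) ≤ ((d1:ℝ) + d3 + 2) * (L / ε) := by
    have h1 : (N : ℝ) < D * L / ε + 1 := Nat.ceil_lt_add_one (by positivity)
    have : D * L / ε = D * (L / ε) := by ring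
    nlinarith
  -- the index equivalence
  set e : ((Fin d1 → Fin N) × (Fin d3 → Fin N)) ≃ Fin (N ^ d1 * N ^ d3) :=
    (Equiv.prodCongr finFunctionFinEquiv finFunctionFinEquiv).trans finProdFinEquiv with he
  refine ⟨N ^ d1 * N ^ d3,
    fun ℓ θ => if (e.symm ℓ).1 = idx N hN θ then (1:ℝ) else 0,
    fun ℓ ρ => f (grid N (e.symm ℓ).1) ρ (grid N (e.symm ℓ).2),
    fun ℓ ω => if (e.symm ℓ).2 = idx N hN ω then (1:ℝ) else 0, ?_, ?_⟩
  · -- rank bound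
    have : ((N ^ d1 * N ^ d3 : ℕ) : ℝ) = (N:ℝ) ^ (d1 + d3) := by
      push_cast; rw [pow_add]
    rw [this]
    calc (N:ℝ) ^ (d1 + d3) ≤ (((d1:ℝ) + d3 + 2) * (L / ε)) ^ (d1 + d3) :=
          pow_le_pow_left₀ hN'.le hNle _
    _ = ((d1:ℝ) + d3 + 2) ^ (d1 + d3) * (L / ε) ^ (d1 + d3) := mul_pow _ _ _
  · -- accuracy
    intro θ ρ ω hθ hρ hω
    have hsum : ∑ ℓ, (if (e.symm ℓ).1 = idx N hN θ then (1:ℝ) else 0) *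
        f (grid N (e.symm ℓ).1) ρ (grid N (e.symm ℓ).2) *
        (if (e.symm ℓ).2 = idx N hN ω then (1:ℝ) else 0)
        = f (grid N (idx N hN θ)) ρ (grid N (idx N hN ω)) := by
      have h1 : ∀ ℓ, (if (e.symm ℓ).1 = idx N hN θ then (1:ℝ) else 0) *
          f (grid N (e.symm ℓ).1) ρ (grid N (e.symm ℓ).2) *
          (if (e.symm ℓ).2 = idx N hN ω then (1:ℝ) else 0)
          = if ℓ = e (idx N hN θ, idx N hN ω) then
              f (grid N (idx N hN θ)) ρ (grid N (idx N hN ω)) else 0 := by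
        intro ℓ
        by_cases h : ℓ = e (idx N hN θ, idx N hN ω)
        · subst h
          simp
        · have hne : e.symm ℓ ≠ (idx N hN θ, idx N hN ω) := by
            intro hcontra
            exact h (by rw [← hcontra, Equiv.apply_symm_apply])
          rw [if_neg h]
          rcases (not_and_or.1 (fun hc => hne (Prod.ext hc.1 hc.2))) with h' | h'
          · rw [if_neg h']; ring
          · rw [if_neg h']; ring
      rw [Finset.sum_congr rfl (fun ℓ _ => h1 ℓ)]
      simp
    rw [hsum]
    have hgθ := grid_inCube N hN (idx N hN θ)
    have hgω := grid_inCube N hN (idx N hN ω)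
    have hlip := hf (grid N (idx N hN θ)) θ ρ ρ (grid N (idx N hN ω)) ω
      hgθ hθ hρ hρ hgω hω
    have hnθ := norm_sub_grid N hN θ hθ
    have hnω := norm_sub_grid N hN ω hω
    have hρρ : ‖ρ - ρ‖ = 0 := by simp
    have hbound : |f θ ρ ω - f (grid N (idx N hN θ)) ρ (grid N (idx N hN ω))| ≤
        L * ((d1:ℝ) / (2 * N) + 0 + (d3:ℝ) / (2 * N)) := by
      refine le_trans hlip ?_
      apply mul_le_mul_of_nonneg_left _ hL.le
      rw [hρρ]
      gcongr
    refine le_trans hbound ?_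
    have hkey : L * ((d1:ℝ) + (d3:ℝ)) ≤ ε * (2 * N) := by
      have h1 : D * L ≤ ε * N := by
        rw [div_le_iff₀ hε] at hNge
        linarith [hNge]
      nlinarith
    have : L * ((d1:ℝ) / (2 * N) + 0 + (d3:ℝ) / (2 * N)) = L * ((d1:ℝ) + d3) / (2 * N) := by
      ring
    rw [this, div_le_iff₀ (by positivity)]
    nlinarith
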